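/- arXiv:1808.00837 — 2 statements merged into one kernel-verified Lean document; each statement's English description precedes it below -/
import Mathlib

section
/- Let ℓ be an odd prime and k ≥ 1. Then s(ℓ^{k+1}) = ℓ^k · s(ℓ), where s(d) is the number of pairs (u, v) modulo d with gcd(uv, d) = 1 and u² + v² ≡ −1 (mod d). -/
/-- `s d` counts pairs `(u, v)` with `1 ≤ u, v ≤ d`, `gcd(u,d) = gcd(v,d) = 1`
and `u² + v² + 1 ≡ 0 (mod d)`. -/
def s (d : ℕ) : ℕ :=
  ((Finset.Icc 1 d ×ˢ Finset.Icc 1 d).filter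
    (fun p => Nat.gcd p.1 d = 1 ∧ Nat.gcd p.2 d = 1 ∧ (p.1 ^ 2 + p.2 ^ 2 + 1) % d = 0)).card

/-- A linear congruence `c + β i ≡ 0 (mod p)` with `p ∤ β` has a unique solution in `range p`. -/
lemma unique_lin (p : ℕ) (hp : p.Prime) (β c : ℕ) (hβ : ¬ p ∣ β) :
    ∃! i, i ∈ Finset.range p ∧ (c + β * i) % p = 0 := by
  haveI : Fact p.Prime := ⟨hp⟩
  have hβ' : (β : ZMod p) ≠ 0 := by
    rwa [Ne, ZMod.natCast_eq_zero_iff]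
  have key : ∀ i : ℕ, (c + β * i) % p = 0 ↔ ((i : ZMod p) = (-(c:ZMod p)) * (β : ZMod p)⁻¹) := by
    intro i
    rw [← Nat.dvd_iff_mod_eq_zero, ← ZMod.natCast_eq_zero_iff]
    push_cast
    constructor
    · intro h
      have hβi : (β : ZMod p) * i = -(c : ZMod p) := by linear_combination h
      field_simp
      linear_combination hβi
    · intro h
      rw [h]
      field_simp
      ring
  refine ⟨((-(c : ZMod p)) * (β : ZMod p)⁻¹).val, ⟨Finset.mem_range.mpr (ZMod.val_lt _), ?_⟩, ?_⟩
  · rw [key]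
    exact ZMod.natCast_rightInverse _
  · rintro i ⟨hir, hic⟩
    rw [key] at hic
    rw [← ZMod.val_cast_of_lt (Finset.mem_range.mp hir), hic]

lemma step (ℓ : ℕ) (hℓ : ℓ.Prime) (hodd : ℓ ≠ 2) (m : ℕ) (hm : 1 ≤ m) :
    s (ℓ ^ (m + 1)) = ℓ * s (ℓ ^ m) := by
  classical
  have hℓpos : 0 < ℓ := hℓ.pos
  set N := ℓ ^ m with hN
  have hNpos : 0 < N := pow_pos hℓpos m
  have hℓN : ℓ ∣ N := dvd_pow_self ℓ (by omega)
  set M := ℓ ^ (m + 1) with hMdef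
  have hM : M = N * ℓ := by rw [hMdef, hN, pow_succ]
  have hNM : N ∣ M := by rw [hM]; exact dvd_mul_right N ℓ
  -- coprimality transfer
  have hcop : ∀ (x e : ℕ), 1 ≤ e → (Nat.gcd x (ℓ ^ e) = 1 ↔ ¬ ℓ ∣ x) := by
    intro x e he
    constructor
    · intro h hdvd
      have : ℓ ∣ 1 := by
        rw [← h]
        exact Nat.dvd_gcd hdvd (dvd_pow_self ℓ (by omega))
      exact hℓ.one_lt.ne' (Nat.dvd_one.mp this)
    · intro h
      exact Nat.Coprime.pow_right e ((Nat.coprime_comm.mp (hℓ.coprime_iff_not_dvd.mpr h)))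
  let A := ((Finset.Icc 1 M ×ˢ Finset.Icc 1 M).filter
    (fun p => Nat.gcd p.1 M = 1 ∧ Nat.gcd p.2 M = 1 ∧ (p.1 ^ 2 + p.2 ^ 2 + 1) % M = 0))
  let B := ((Finset.Icc 1 N ×ˢ Finset.Icc 1 N).filter
    (fun p => Nat.gcd p.1 N = 1 ∧ Nat.gcd p.2 N = 1 ∧ (p.1 ^ 2 + p.2 ^ 2 + 1) % N = 0))
  have hsA : s M = A.card := rfl
  have hsB : s N = B.card := rfl
  let f : ℕ × ℕ → ℕ × ℕ := fun p => ((p.1 - 1) % N + 1, (p.2 - 1) % N + 1)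
  -- reduction lemma : for x in [1, M], f-component is in [1,N] and ≡ x mod N
  have hr : ∀ x, 1 ≤ x → (x - 1) % N + 1 ∈ Finset.Icc 1 N ∧ ((x - 1) % N + 1) % N = x % N := by
    intro x hx
    have h1 : (x - 1) % N < N := Nat.mod_lt _ hNpos
    refine ⟨Finset.mem_Icc.mpr ⟨by omega, by omega⟩, ?_⟩
    conv_rhs => rw [show x = (x - 1) + 1 by omega]
    rw [Nat.add_mod, Nat.add_mod (x-1) 1, Nat.mod_mod_of_dvd]
    exact dvd_refl N
  have hmaps : ∀ p ∈ A, f p ∈ B := by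
    rintro ⟨u, v⟩ hp
    obtain ⟨hmem, hgu, hgv, hcong⟩ := Finset.mem_filter.mp hp
    obtain ⟨hu, hv⟩ := Finset.mem_product.mp hmem
    have hu1 : 1 ≤ u := (Finset.mem_Icc.mp hu).1
    have hv1 : 1 ≤ v := (Finset.mem_Icc.mp hv).1
    obtain ⟨hruI, hrumod⟩ := hr u hu1
    obtain ⟨hrvI, hrvmod⟩ := hr v hv1
    have hmodN : ∀ x, 1 ≤ x → Nat.gcd x M = 1 → ((x-1) % N + 1) ^ 2 % N = x ^ 2 % N ∧
        Nat.gcd ((x-1) % N + 1) N = 1 := by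
      intro x hx hg
      obtain ⟨hI, hmod⟩ := hr x hx
      constructor
      · have : ((x-1) % N + 1) ≡ x [MOD N] := hmod
        exact (this.pow 2)
      · rw [hcop _ m hm]
        intro hdvd
        have h1 : ((x-1) % N + 1) ≡ x [MOD N] := hmod
        have h2 : ((x-1) % N + 1) ≡ x [MOD ℓ] := h1.of_dvd hℓN
        have : ℓ ∣ x := (Nat.modEq_zero_iff_dvd).mp (h2.symm.trans (Nat.modEq_zero_iff_dvd.mpr hdvd))
        exact ((hcop x (m+1) (by omega)).mp hg) this
    obtain ⟨hru2, hgru⟩ := hmodN u hu1 hgu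
    obtain ⟨hrv2, hgrv⟩ := hmodN v hv1 hgv
    refine Finset.mem_filter.mpr ⟨Finset.mem_product.mpr ⟨hruI, hrvI⟩, hgru, hgrv, ?_⟩
    have hNdvd : N ∣ u ^ 2 + v ^ 2 + 1 :=
      dvd_trans hNM (Nat.dvd_iff_mod_eq_zero.mpr hcong)
    have heq : (((u-1) % N + 1) ^ 2 + ((v-1) % N + 1) ^ 2 + 1) ≡ (u ^ 2 + v ^ 2 + 1) [MOD N] :=
      Nat.ModEq.add (Nat.ModEq.add hru2 hrv2) rfl
    have := heq.trans (Nat.modEq_zero_iff_dvd.mpr hNdvd)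
    have h := this
    unfold Nat.ModEq at h
    rw [Nat.zero_mod] at h
    exact h
  rw [hsA, Finset.card_eq_sum_card_fiberwise hmaps]
  have key : ∀ ab ∈ B, (A.filter (fun p => f p = ab)).card = ℓ := by
    rintro ⟨a, b⟩ hab
    obtain ⟨hmem, hga, hgb, hcong⟩ := Finset.mem_filter.mp hab
    obtain ⟨haI, hbI⟩ := Finset.mem_product.mp hmem
    obtain ⟨ha1, haN⟩ := Finset.mem_Icc.mp haI
    obtain ⟨hb1, hbN⟩ := Finset.mem_Icc.mp hbI
    obtain ⟨c, hc⟩ : N ∣ a ^ 2 + b ^ 2 + 1 := Nat.dvd_iff_mod_eq_zero.mpr hcong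
    have hla : ¬ ℓ ∣ a := (hcop a m hm).mp hga
    have hlb : ¬ ℓ ∣ b := (hcop b m hm).mp hgb
    have h2a : ¬ ℓ ∣ 2 * a := by
      intro h
      rcases (Nat.Prime.dvd_mul hℓ).mp h with h2 | ha
      · exact hodd ((Nat.prime_dvd_prime_iff_eq hℓ Nat.prime_two).mp h2)
      · exact hla ha
    -- the key divisibility identity
    have hdvd_iff : ∀ i j : ℕ, ((a + N * i) ^ 2 + (b + N * j) ^ 2 + 1) % M = 0 ↔
        (c + 2 * a * i + 2 * b * j) % ℓ = 0 := by
      intro i j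
      have hid : (a + N * i) ^ 2 + (b + N * j) ^ 2 + 1 =
          N * (N * (i ^ 2 + j ^ 2) + (c + 2 * a * i + 2 * b * j)) := by
        have h1 : (a + N * i) ^ 2 + (b + N * j) ^ 2 + 1 =
            (a ^ 2 + b ^ 2 + 1) + N * (N * (i ^ 2 + j ^ 2) + (2 * a * i + 2 * b * j)) := by ring
        rw [h1, hc]; ring
      rw [← Nat.dvd_iff_mod_eq_zero, ← Nat.dvd_iff_mod_eq_zero, hid, hM,
        Nat.mul_dvd_mul_iff_left hNpos]
      exact Nat.dvd_add_right (Dvd.dvd.mul_right hℓN _)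
    -- value of the reduction map on lifts
    have hrval : ∀ (x : ℕ) (i : ℕ), 1 ≤ x → x ≤ N → (x + N * i - 1) % N + 1 = x := by
      intro x i hx1 hxN
      have h1 : x + N * i - 1 = (x - 1) + N * i := by omega
      rw [h1, Nat.add_mul_mod_self_left, Nat.mod_eq_of_lt (by omega)]
      omega
    have hbound : ∀ x i : ℕ, x ≤ N → i < ℓ → x + N * i ≤ M := by
      intro x i hx hi
      have h1 : N * i + N ≤ N * ℓ := by
        calc N * i + N = N * (i + 1) := by ring
          _ ≤ N * ℓ := Nat.mul_le_mul_left N hi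
      rw [hM]; omega
    -- the fiber is in bijection with G
    let G := ((Finset.range ℓ ×ˢ Finset.range ℓ).filter
      (fun q => (c + 2 * a * q.1 + 2 * b * q.2) % ℓ = 0))
    have hGA : G.card = (A.filter (fun p => f p = (a, b))).card := by
      apply Finset.card_bij (fun q _ => (a + N * q.1, b + N * q.2))
      · rintro ⟨i, j⟩ hq
        obtain ⟨hmemq, hcondq⟩ := Finset.mem_filter.mp hq
        obtain ⟨hi, hj⟩ := Finset.mem_product.mp hmemq
        have hi' : i < ℓ := Finset.mem_range.mp hi
        have hj' : j < ℓ := Finset.mem_range.mp hj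
        refine Finset.mem_filter.mpr ⟨Finset.mem_filter.mpr ⟨Finset.mem_product.mpr ⟨?_, ?_⟩, ?_, ?_, ?_⟩, ?_⟩
        · exact Finset.mem_Icc.mpr ⟨by omega, hbound a i haN hi'⟩
        · exact Finset.mem_Icc.mpr ⟨by omega, hbound b j hbN hj'⟩
        · rw [hcop _ (m+1) (by omega)]
          intro h
          have h2 : ℓ ∣ a + N * i := h
          have : ℓ ∣ a := (Nat.dvd_add_right (hℓN.mul_right i)).mp (by rwa [Nat.add_comm] at h2)
          exact hla this
        · rw [hcop _ (m+1) (by omega)]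
          intro h
          have h2 : ℓ ∣ b + N * j := h
          have : ℓ ∣ b := (Nat.dvd_add_right (hℓN.mul_right j)).mp (by rwa [Nat.add_comm] at h2)
          exact hlb this
        · exact (hdvd_iff i j).mpr hcondq
        · show ((a + N * i - 1) % N + 1, (b + N * j - 1) % N + 1) = (a, b)
          rw [hrval a i ha1 haN, hrval b j hb1 hbN]
      · rintro ⟨i₁, j₁⟩ h₁ ⟨i₂, j₂⟩ h₂ heq
        simp only [Prod.mk.injEq] at heq
        have e1 : N * i₁ = N * i₂ := by omega
        have e2 : N * j₁ = N * j₂ := by omega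
        have : i₁ = i₂ := Nat.eq_of_mul_eq_mul_left hNpos e1
        have : j₁ = j₂ := Nat.eq_of_mul_eq_mul_left hNpos e2
        simp_all
      · rintro ⟨u, v⟩ hp
        obtain ⟨hpA, hpf⟩ := Finset.mem_filter.mp hp
        obtain ⟨hmemp, hgu, hgv, hcongp⟩ := Finset.mem_filter.mp hpA
        obtain ⟨huI, hvI⟩ := Finset.mem_product.mp hmemp
        obtain ⟨hu1, huM⟩ := Finset.mem_Icc.mp huI
        obtain ⟨hv1, hvM⟩ := Finset.mem_Icc.mp hvI
        have hfp : (u - 1) % N + 1 = a ∧ (v - 1) % N + 1 = b := by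
          have : ((u - 1) % N + 1, (v - 1) % N + 1) = (a, b) := hpf
          exact ⟨congrArg Prod.fst this, congrArg Prod.snd this⟩
        -- decompose u and v
        have hdec : ∀ x y : ℕ, 1 ≤ x → x ≤ M → (x - 1) % N + 1 = y → 1 ≤ y → y ≤ N →
            ∃ i < ℓ, x = y + N * i := by
          intro x y hx1 hxM hxy hy1 hyN
          refine ⟨(x - 1) / N, ?_, ?_⟩
          · rw [Nat.div_lt_iff_lt_mul hNpos]
            rw [hM] at hxM
            have hcomm : N * ℓ = ℓ * N := Nat.mul_comm N ℓ
            omega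
          · have h2 := Nat.div_add_mod (x - 1) N
            have h3 : (x - 1) % N = y - 1 := by omega
            omega
        obtain ⟨i, hi, hui⟩ := hdec u a hu1 huM hfp.1 ha1 haN
        obtain ⟨j, hj, hvj⟩ := hdec v b hv1 hvM hfp.2 hb1 hbN
        refine ⟨(i, j), Finset.mem_filter.mpr ⟨Finset.mem_product.mpr
          ⟨Finset.mem_range.mpr hi, Finset.mem_range.mpr hj⟩, ?_⟩, ?_⟩
        · exact (hdvd_iff i j).mp (by rw [← hui, ← hvj]; exact hcongp)
        · simp [hui, hvj]
      -- done with bijection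
    -- now count G
    have hG : G.card = (Finset.range ℓ).card := by
      apply Finset.card_bij (fun q _ => q.2)
      · rintro ⟨i, j⟩ hq
        exact (Finset.mem_product.mp (Finset.mem_filter.mp hq).1).2
      · rintro ⟨i₁, j₁⟩ h₁ ⟨i₂, j₂⟩ h₂ heq
        simp only at heq
        subst heq
        obtain ⟨hm₁, hc₁⟩ := Finset.mem_filter.mp h₁
        obtain ⟨hm₂, hc₂⟩ := Finset.mem_filter.mp h₂
        have hu := unique_lin ℓ hℓ (2 * a) (c + 2 * b * j₁) h2a
        have e₁ : i₁ = i₂ := hu.unique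
          ⟨(Finset.mem_product.mp hm₁).1, by rw [show c + 2*b*j₁ + 2*a*i₁ = c + 2*a*i₁ + 2*b*j₁ by ring]; exact hc₁⟩
          ⟨(Finset.mem_product.mp hm₂).1, by rw [show c + 2*b*j₁ + 2*a*i₂ = c + 2*a*i₂ + 2*b*j₁ by ring]; exact hc₂⟩
        simp [e₁]
      · intro j hjr
        obtain ⟨i, ⟨hir, hicond⟩, _⟩ := unique_lin ℓ hℓ (2 * a) (c + 2 * b * j) h2a
        refine ⟨(i, j), Finset.mem_filter.mpr ⟨Finset.mem_product.mpr ⟨hir, hjr⟩, ?_⟩, rfl⟩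
        rw [show c + 2*a*i + 2*b*j = c + 2*b*j + 2*a*i by ring]
        exact hicond
    rw [← hGA, hG, Finset.card_range]
  rw [Finset.sum_congr rfl key, Finset.sum_const, hsB, smul_eq_mul, mul_comm]

theorem stmt_6 (ℓ : ℕ) (hℓ : ℓ.Prime) (hodd : ℓ ≠ 2) (k : ℕ) (hk : 1 ≤ k) :
    s (ℓ ^ (k + 1)) = ℓ ^ k * s ℓ := by
  clear hk
  induction k with
  | zero => simp
  | succ n ih =>
    rw [step ℓ hℓ hodd (n + 1) (by omega), ih, pow_succ]
    ring
end

section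
/- For every odd positive integer d, s(d) ≤ d · ∏_{p ∣ d} (1 + 1/p), where s(d) is the number of pairs (u, v) modulo d with gcd(uv, d) = 1 and u² + v² ≡ −1 (mod d), and the product ranges over primes dividing d. -/
noncomputable def T (d : ℕ) : ℕ :=
  Nat.card {x : ZMod d × ZMod d // IsUnit x.1 ∧ IsUnit x.2 ∧ x.1 ^ 2 + x.2 ^ 2 + 1 = 0}

lemma T_eq_card (d : ℕ) [NeZero d] :
    T d = (Finset.univ.filter (fun x : ZMod d × ZMod d =>
      IsUnit x.1 ∧ IsUnit x.2 ∧ x.1 ^ 2 + x.2 ^ 2 + 1 = 0)).card := by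
  rw [T, Nat.card_eq_fintype_card, Fintype.card_subtype]

lemma mod_cast_iff {d : ℕ} [NeZero d] (a b : ℕ) :
    (a ^ 2 + b ^ 2 + 1) % d = 0 ↔ (a : ZMod d) ^ 2 + (b : ZMod d) ^ 2 + 1 = 0 := by
  rw [← Nat.dvd_iff_mod_eq_zero, ← ZMod.natCast_eq_zero_iff]
  push_cast
  exact Iff.rfl

lemma back_mem {d : ℕ} [NeZero d] (y : ZMod d) :
    (if y = 0 then d else y.val) ∈ Finset.Icc 1 d := by
  have hd : 0 < d := Nat.pos_of_neZero d
  split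
  · simp only [Finset.mem_Icc]; omega
  · next h =>
    have h1 : y.val ≠ 0 := fun hv => h ((ZMod.val_eq_zero y).mp hv)
    have h2 : y.val < d := ZMod.val_lt y
    simp only [Finset.mem_Icc]
    omega

lemma back_cast {d : ℕ} [NeZero d] (y : ZMod d) :
    (((if y = 0 then d else y.val) : ℕ) : ZMod d) = y := by
  split
  · next h => simp [h]
  · exact ZMod.natCast_zmod_val y

lemma forward_back {d : ℕ} [NeZero d] {a : ℕ} (ha : a ∈ Finset.Icc 1 d) :
    (if (a : ZMod d) = 0 then d else (a : ZMod d).val) = a := by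
  simp only [Finset.mem_Icc] at ha
  split
  · next h =>
    have hdvd : d ∣ a := (ZMod.natCast_eq_zero_iff a d).mp h
    have := Nat.le_of_dvd (by omega) hdvd
    omega
  · next h =>
    have hlt : a < d := lt_of_le_of_ne ha.2 (fun he => h (by rw [he]; exact ZMod.natCast_self d))
    exact ZMod.val_cast_of_lt hlt

lemma s_eq_T (d : ℕ) (hd : 0 < d) : s d = T d := by
  haveI : NeZero d := ⟨hd.ne'⟩
  rw [T_eq_card, s]
  refine Finset.card_bij' (fun x _ => ((x.1 : ZMod d), (x.2 : ZMod d)))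
    (fun y _ => ((if y.1 = 0 then d else y.1.val), (if y.2 = 0 then d else y.2.val)))
    ?_ ?_ ?_ ?_
  · intro x hx
    simp only [Finset.mem_filter, Finset.mem_product, Finset.mem_Icc] at hx
    obtain ⟨-, h1, h2, h3⟩ := hx
    simp only [Finset.mem_filter, Finset.mem_univ, true_and]
    exact ⟨(ZMod.isUnit_iff_coprime x.1 d).mpr h1, (ZMod.isUnit_iff_coprime x.2 d).mpr h2,
      (mod_cast_iff x.1 x.2).mp h3⟩
  · intro y hy
    simp only [Finset.mem_filter, Finset.mem_univ, true_and] at hy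
    obtain ⟨h1, h2, h3⟩ := hy
    simp only [Finset.mem_filter, Finset.mem_product]
    refine ⟨⟨back_mem y.1, back_mem y.2⟩, ?_, ?_, ?_⟩
    · exact (ZMod.isUnit_iff_coprime _ d).mp (by rw [back_cast y.1]; exact h1)
    · exact (ZMod.isUnit_iff_coprime _ d).mp (by rw [back_cast y.2]; exact h2)
    · exact (mod_cast_iff _ _).mpr (by rw [back_cast y.1, back_cast y.2]; exact h3)
  · intro x hx
    simp only [Finset.mem_filter, Finset.mem_product] at hx
    exact Prod.ext (forward_back hx.1.1) (forward_back hx.1.2)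
  · intro y hy
    exact Prod.ext (back_cast y.1) (back_cast y.2)

lemma isUnit_prod_iff' {M N : Type*} [Monoid M] [Monoid N] {x : M × N} :
    IsUnit x ↔ IsUnit x.1 ∧ IsUnit x.2 := by
  constructor
  · intro h
    exact ⟨h.map (MonoidHom.fst M N), h.map (MonoidHom.snd M N)⟩
  · rintro ⟨⟨u, hu⟩, ⟨v, hv⟩⟩
    exact ⟨⟨(u, v), ((u⁻¹ : Mˣ), (v⁻¹ : Nˣ)), by ext <;> simp, by ext <;> simp⟩,
      by ext <;> simp [hu, hv]⟩

lemma isUnit_ringEquiv_iff {R S : Type*} [Ring R] [Ring S] (e : R ≃+* S) {a : R} :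
    IsUnit (e a) ↔ IsUnit a := by
  constructor
  · intro h
    simpa using h.map e.symm.toRingHom
  · exact fun h => h.map e.toRingHom

lemma T_mul {m n : ℕ} [NeZero m] [NeZero n] (h : m.Coprime n) : T (m * n) = T m * T n := by
  rw [T, T, T, ← Nat.card_prod]
  refine Nat.card_congr ?_
  set e := ZMod.chineseRemainder h with he
  refine Equiv.trans (Equiv.subtypeEquiv (p := fun x : ZMod (m*n) × ZMod (m*n) =>
      IsUnit x.1 ∧ IsUnit x.2 ∧ x.1 ^ 2 + x.2 ^ 2 + 1 = 0)
      (q := fun y : (ZMod m × ZMod m) × (ZMod n × ZMod n) =>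
        (IsUnit y.1.1 ∧ IsUnit y.1.2 ∧ y.1.1 ^ 2 + y.1.2 ^ 2 + 1 = 0) ∧
        (IsUnit y.2.1 ∧ IsUnit y.2.2 ∧ y.2.1 ^ 2 + y.2.2 ^ 2 + 1 = 0))
    ((e.toEquiv.prodCongr e.toEquiv).trans (Equiv.prodProdProdComm _ _ _ _)) ?_)
    (Equiv.subtypeProdEquivProd
      (p := fun a : ZMod m × ZMod m => IsUnit a.1 ∧ IsUnit a.2 ∧ a.1 ^ 2 + a.2 ^ 2 + 1 = 0)
      (q := fun b : ZMod n × ZMod n => IsUnit b.1 ∧ IsUnit b.2 ∧ b.1 ^ 2 + b.2 ^ 2 + 1 = 0))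
  intro x
  have hu1 : IsUnit x.1 ↔ IsUnit (e x.1).1 ∧ IsUnit (e x.1).2 := by
    rw [← isUnit_prod_iff']
    exact (isUnit_ringEquiv_iff e).symm
  have hu2 : IsUnit x.2 ↔ IsUnit (e x.2).1 ∧ IsUnit (e x.2).2 := by
    rw [← isUnit_prod_iff']
    exact (isUnit_ringEquiv_iff e).symm
  have heq : x.1 ^ 2 + x.2 ^ 2 + 1 = 0 ↔
      ((e x.1).1 ^ 2 + (e x.2).1 ^ 2 + 1 = 0 ∧ (e x.1).2 ^ 2 + (e x.2).2 ^ 2 + 1 = 0) := by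
    rw [← e.injective.eq_iff, map_add, map_add, map_pow, map_pow, map_one, map_zero,
      Prod.ext_iff]
    simp [Prod.pow_def, Prod.add_def]
  simp only [Equiv.trans_apply, Equiv.prodCongr_apply, RingEquiv.toEquiv_eq_coe,
    EquivLike.coe_coe, Prod.map_apply, Equiv.prodProdProdComm_apply]
  rw [hu1, hu2, heq]
  tauto

open Finset

section Conic
variable {F : Type*} [Field F]

/-- vertical line case: second intersection point. -/
lemma vert_case {u0 v0 v : F} (hE0 : u0 ^ 2 + v0 ^ 2 + 1 = 0) (hE : u0 ^ 2 + v ^ 2 + 1 = 0)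
    (hne : v ≠ v0) : v = -v0 ∧ v0 ≠ 0 := by
  have hsq : (v - v0) * (v + v0) = 0 := by linear_combination hE - hE0
  rcases mul_eq_zero.mp hsq with h | h
  · exact absurd (sub_eq_zero.mp h) hne
  · have hv : v = -v0 := eq_neg_of_add_eq_zero_left h
    refine ⟨hv, fun h0 => hne ?_⟩
    simp [hv, h0]

end Conic

lemma conic_card_le' {F : Type*} [Field F] [Fintype F] [DecidableEq F] (h2 : (2 : F) ≠ 0) :
    (Finset.univ.filter (fun x : F × F => x.1 ^ 2 + x.2 ^ 2 + 1 = 0)).card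
      ≤ Fintype.card F + 1 := by
  set C := Finset.univ.filter (fun x : F × F => x.1 ^ 2 + x.2 ^ 2 + 1 = 0) with hC
  rcases C.eq_empty_or_nonempty with h | ⟨P0, hP0⟩
  · rw [h]; simp
  have hE0 : P0.1 ^ 2 + P0.2 ^ 2 + 1 = 0 := by
    rw [hC, Finset.mem_filter] at hP0; exact hP0.2
  have hkey : P0.1 ^ 2 + P0.2 ^ 2 ≠ 0 := by
    intro h
    have : (1 : F) = 0 := by linear_combination hE0 - h
    exact one_ne_zero this
  set u0 := P0.1
  set v0 := P0.2
  set mt : Option F := if v0 = 0 then none else some (-u0 / v0) with hmt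
  set φ : F × F → Option F :=
    fun P => if P.1 = u0 then none else some ((P.2 - v0) / (P.1 - u0)) with hφ
  have hcard : C.card = (C.erase P0).card + 1 := (Finset.card_erase_add_one hP0).symm
  have htgt : ((Finset.univ : Finset (Option F)).erase mt).card = Fintype.card F := by
    rw [Finset.card_erase_of_mem (Finset.mem_univ _), Finset.card_univ, Fintype.card_option]
    omega
  -- facts about points in C.erase P0
  have hpt : ∀ P ∈ C.erase P0, P.1 ^ 2 + P.2 ^ 2 + 1 = 0 ∧ P ≠ P0 := by
    intro P hP
    rw [Finset.mem_erase, hC, Finset.mem_filter] at hP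
    exact ⟨hP.2.2, hP.1⟩
  have hinj : ∀ P ∈ C.erase P0, ∀ Q ∈ C.erase P0, φ P = φ Q → P = Q := by
    intro P hP Q hQ hPQ
    obtain ⟨hEP, hPne⟩ := hpt P hP
    obtain ⟨hEQ, hQne⟩ := hpt Q hQ
    by_cases hxP : P.1 = u0 <;> by_cases hxQ : Q.1 = u0
    · -- both vertical
      obtain ⟨hv, -⟩ := vert_case hE0 (by rw [← hxP]; exact hEP)
        (fun h => hPne (Prod.ext hxP h))
      obtain ⟨hv', -⟩ := vert_case hE0 (by rw [← hxQ]; exact hEQ)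
        (fun h => hQne (Prod.ext hxQ h))
      exact Prod.ext (hxP.trans hxQ.symm) (hv.trans hv'.symm)
    · simp only [hφ, if_pos hxP, if_neg hxQ] at hPQ; exact absurd hPQ (by simp)
    · simp only [hφ, if_pos hxQ, if_neg hxP] at hPQ; exact absurd hPQ (by simp)
    · -- both slope case
      simp only [hφ, if_neg hxP, if_neg hxQ, Option.some.injEq] at hPQ
      set m : F := (P.2 - v0) / (P.1 - u0) with hm_def
      have haP : P.1 - u0 ≠ 0 := sub_ne_zero.mpr hxP
      have haQ : Q.1 - u0 ≠ 0 := sub_ne_zero.mpr hxQ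
      have hm : P.2 - v0 = m * (P.1 - u0) := (div_mul_cancel₀ _ haP).symm
      have hmQ : Q.2 - v0 = m * (Q.1 - u0) := by
        rw [hPQ]; exact (div_mul_cancel₀ _ haQ).symm
      have hfacP : (P.1 - u0) * ((2 * u0 + 2 * v0 * m) + (P.1 - u0) * (1 + m ^ 2)) = 0 := by
        linear_combination hEP - hE0 - (P.2 + v0 + m * (P.1 - u0)) * hm
      have hfacQ : (Q.1 - u0) * ((2 * u0 + 2 * v0 * m) + (Q.1 - u0) * (1 + m ^ 2)) = 0 := by
        linear_combination hEQ - hE0 - (Q.2 + v0 + m * (Q.1 - u0)) * hmQ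
      have hlinP : (2 * u0 + 2 * v0 * m) + (P.1 - u0) * (1 + m ^ 2) = 0 :=
        (mul_eq_zero.mp hfacP).resolve_left haP
      have hlinQ : (2 * u0 + 2 * v0 * m) + (Q.1 - u0) * (1 + m ^ 2) = 0 :=
        (mul_eq_zero.mp hfacQ).resolve_left haQ
      by_cases h1m : 1 + m ^ 2 = 0
      · exfalso
        have hL : 2 * u0 + 2 * v0 * m = 0 := by
          linear_combination hlinP - (P.1 - u0) * h1m
        have habs : (2 : F) * 2 * (u0 ^ 2 + v0 ^ 2) = 0 := by
          linear_combination (2 * u0 - 2 * v0 * m) * hL + 4 * v0 ^ 2 * h1m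
        rcases mul_eq_zero.mp habs with h | h
        · exact (mul_ne_zero h2 h2) h
        · exact hkey h
      · have hsub : (P.1 - Q.1) * (1 + m ^ 2) = 0 := by
          linear_combination hlinP - hlinQ
        have h1 : P.1 = Q.1 := sub_eq_zero.mp ((mul_eq_zero.mp hsub).resolve_right h1m)
        have h2' : P.2 = Q.2 := by
          have h1' : P.1 - u0 = Q.1 - u0 := by rw [h1]
          linear_combination hm - hmQ + m * h1'
        exact Prod.ext h1 h2'
  have hmaps : ∀ P ∈ C.erase P0, φ P ∈ (Finset.univ : Finset (Option F)).erase mt := by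
    intro P hP
    obtain ⟨hEP, hPne⟩ := hpt P hP
    rw [Finset.mem_erase]
    refine ⟨?_, Finset.mem_univ _⟩
    by_cases hxP : P.1 = u0
    · -- φ P = none ; need mt ≠ none, i.e. v0 ≠ 0
      obtain ⟨-, hv0⟩ := vert_case hE0 (by rw [← hxP]; exact hEP)
        (fun h => hPne (Prod.ext hxP h))
      simp only [hφ, if_pos hxP, hmt, if_neg hv0]
      simp
    · simp only [hφ, if_neg hxP, hmt]
      by_cases hv0 : v0 = 0
      · rw [if_pos hv0]; simp
      · rw [if_neg hv0]
        simp only [ne_eq, Option.some.injEq]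
        intro hslope
        have haP : P.1 - u0 ≠ 0 := sub_ne_zero.mpr hxP
        have hcross : (P.2 - v0) * v0 = -u0 * (P.1 - u0) := (div_eq_div_iff haP hv0).mp hslope
        have hfin : (P.1 - u0) ^ 2 * (u0 ^ 2 + v0 ^ 2) = 0 := by
          linear_combination v0 ^ 2 * hEP - v0 ^ 2 * hE0 +
            (u0 * (P.1 - u0) - v0 * (P.2 - v0) - 2 * v0 ^ 2) * hcross
        rcases mul_eq_zero.mp hfin with h | h
        · exact haP (pow_eq_zero_iff (by norm_num) |>.mp h)
        · exact hkey h
  calc C.card = (C.erase P0).card + 1 := hcard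
    _ ≤ ((Finset.univ : Finset (Option F)).erase mt).card + 1 :=
        Nat.add_le_add_right (Finset.card_le_card_of_injOn φ hmaps
          (fun P hP Q hQ h => hinj P (Finset.mem_coe.mp hP) Q (Finset.mem_coe.mp hQ) h)) 1
    _ = Fintype.card F + 1 := by rw [htgt]

lemma conic_card_le {p : ℕ} [NeZero p] (hp : p.Prime) (hodd : Odd p) :
    (Finset.univ.filter (fun x : ZMod p × ZMod p => x.1 ^ 2 + x.2 ^ 2 + 1 = 0)).card
      ≤ p + 1 := by
  haveI : Fact p.Prime := ⟨hp⟩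
  have h2 : (2 : ZMod p) ≠ 0 := by
    intro h
    have : (p : ℕ) ∣ 2 := (ZMod.natCast_eq_zero_iff 2 p).mp (by exact_mod_cast h)
    have hp2 : p = 2 := (Nat.prime_dvd_prime_iff_eq hp Nat.prime_two).mp this
    rw [hp2, Nat.odd_iff] at hodd
    omega
  have := conic_card_le' h2
  rwa [ZMod.card] at this

lemma unit_of_unit_mod_p {p j : ℕ} [NeZero (p ^ j)] [NeZero p] (hj : j ≠ 0)
    {z : ZMod (p ^ j)} (h : IsUnit (ZMod.castHom (dvd_pow_self p hj) (ZMod p) z)) :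
    IsUnit z := by
  have hz : z = ((z.val : ℕ) : ZMod (p ^ j)) := (ZMod.natCast_zmod_val z).symm
  have hcast : (ZMod.castHom (dvd_pow_self p hj) (ZMod p)) z = ((z.val : ℕ) : ZMod p) := by
    rw [ZMod.castHom_apply, ← ZMod.natCast_val]
  rw [hcast] at h
  rw [hz]
  rw [ZMod.isUnit_iff_coprime] at h ⊢
  exact Nat.Coprime.pow_right j h

lemma unit_mod_p_of_unit {p j : ℕ} [NeZero (p ^ j)] [NeZero p] (hj : j ≠ 0)
    {z : ZMod (p ^ j)} (h : IsUnit z) :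
    IsUnit ((z.val : ℕ) : ZMod p) := by
  rw [ZMod.isUnit_iff_coprime]
  have := (ZMod.isUnit_iff_coprime z.val (p ^ j)).mp (by rwa [ZMod.natCast_zmod_val])
  exact Nat.Coprime.coprime_dvd_right (dvd_pow_self p hj) this

lemma T_pow_succ_le {p k : ℕ} (hp : p.Prime) (hodd : Odd p) (hk : k ≠ 0) :
    T (p ^ (k + 1)) ≤ p * T (p ^ k) := by
  haveI : Fact p.Prime := ⟨hp⟩
  haveI : NeZero p := ⟨hp.pos.ne'⟩
  haveI h1 : NeZero (p ^ (k + 1)) := ⟨pow_ne_zero _ hp.pos.ne'⟩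
  haveI h2 : NeZero (p ^ k) := ⟨pow_ne_zero _ hp.pos.ne'⟩
  have h2unit : (2 : ZMod p) ≠ 0 := by
    intro h
    have : (p : ℕ) ∣ 2 := (ZMod.natCast_eq_zero_iff 2 p).mp (by exact_mod_cast h)
    have hp2 : p = 2 := (Nat.prime_dvd_prime_iff_eq hp Nat.prime_two).mp this
    rw [hp2, Nat.odd_iff] at hodd
    omega
  rw [T_eq_card, T_eq_card]
  set π := ZMod.castHom (pow_dvd_pow p (Nat.le_succ k)) (ZMod (p ^ k)) with hπ
  have hπval : ∀ z : ZMod (p ^ (k + 1)), (π z).val = z.val % p ^ k := by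
    intro z
    rw [ZMod.castHom_apply, ← ZMod.natCast_val, ZMod.val_natCast]
  have hπinj : ∀ z w : ZMod (p ^ (k + 1)), π z = π w → z.val / p ^ k = w.val / p ^ k → z = w := by
    intro z w hzw hdiv
    have hmod : z.val % p ^ k = w.val % p ^ k := by
      rw [← hπval, ← hπval, hzw]
    have : z.val = w.val := by
      conv_lhs => rw [← Nat.div_add_mod z.val (p ^ k)]
      conv_rhs => rw [← Nat.div_add_mod w.val (p ^ k)]
      rw [hdiv, hmod]
    rw [← ZMod.natCast_zmod_val z, ← ZMod.natCast_zmod_val w, this]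
  set tgt := (Finset.univ.filter (fun x : ZMod (p ^ k) × ZMod (p ^ k) =>
      IsUnit x.1 ∧ IsUnit x.2 ∧ x.1 ^ 2 + x.2 ^ 2 + 1 = 0)) ×ˢ Finset.range p with htgtdef
  have htgt : tgt.card = p * (Finset.univ.filter (fun x : ZMod (p ^ k) × ZMod (p ^ k) =>
      IsUnit x.1 ∧ IsUnit x.2 ∧ x.1 ^ 2 + x.2 ^ 2 + 1 = 0)).card := by
    rw [htgtdef, Finset.card_product, Finset.card_range, Nat.mul_comm]
  rw [← htgt]
  apply Finset.card_le_card_of_injOn (fun x => ((π x.1, π x.2), x.1.val / p ^ k))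
  · -- maps to
    intro x hx
    simp only [Finset.mem_coe, Finset.mem_filter, Finset.mem_univ, true_and] at hx
    obtain ⟨hu, hv, heq⟩ := hx
    rw [htgtdef, Finset.mem_coe, Finset.mem_product, Finset.mem_filter, Finset.mem_range]
    refine ⟨⟨Finset.mem_univ _, hu.map π, hv.map π, ?_⟩, ?_⟩
    · have := congrArg π heq
      simpa using this
    · have hv1 := ZMod.val_lt x.1
      have hps : p ^ (k + 1) = p ^ k * p := pow_succ p k
      exact Nat.div_lt_of_lt_mul (by omega)
  · -- injective
    intro x hx y hy hxy
    simp only [Finset.mem_coe, Finset.mem_filter, Finset.mem_univ, true_and] at hx hy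
    obtain ⟨hux, hvx, hEx⟩ := hx
    obtain ⟨huy, hvy, hEy⟩ := hy
    simp only [Prod.mk.injEq] at hxy
    obtain ⟨⟨hπ1, hπ2⟩, hdiv⟩ := hxy
    have h1 : x.1 = y.1 := hπinj _ _ hπ1 hdiv
    -- now second coordinates
    have hsq : x.2 ^ 2 = y.2 ^ 2 := by
      linear_combination hEx - hEy - (x.1 + y.1) * h1
    have hfac : (x.2 - y.2) * (x.2 + y.2) = 0 := by linear_combination hsq
    have hmod : x.2.val % p ^ k = y.2.val % p ^ k := by
      rw [← hπval, ← hπval, hπ2]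
    have hmodp : ((x.2.val : ℕ) : ZMod p) = ((y.2.val : ℕ) : ZMod p) := by
      rw [ZMod.natCast_eq_natCast_iff]
      exact Nat.ModEq.of_dvd (dvd_pow_self p hk) hmod
    have hsum_unit : IsUnit (x.2 + y.2) := by
      apply unit_of_unit_mod_p (Nat.succ_ne_zero k)
      have hcast : ∀ z : ZMod (p ^ (k + 1)),
          (ZMod.castHom (dvd_pow_self p (Nat.succ_ne_zero k)) (ZMod p)) z
            = ((z.val : ℕ) : ZMod p) := by
        intro z
        rw [ZMod.castHom_apply, ← ZMod.natCast_val]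
      rw [map_add, hcast, hcast, hmodp, ← two_mul]
      exact (isUnit_iff_ne_zero.mpr h2unit).mul
        (unit_mod_p_of_unit (Nat.succ_ne_zero k) hvy)
    have h2eq : x.2 = y.2 := by
      have := (hsum_unit.mul_left_eq_zero).mp hfac
      exact sub_eq_zero.mp this
    exact Prod.ext h1 h2eq

lemma T_one_le : T 1 ≤ 1 := by
  rw [T_eq_card]
  exact le_trans (Finset.card_filter_le _ _) (by simp)

lemma T_prime_le {p : ℕ} (hp : p.Prime) (hodd : Odd p) : T p ≤ p + 1 := by
  haveI : NeZero p := ⟨hp.pos.ne'⟩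
  rw [T_eq_card]
  refine le_trans (Finset.card_le_card ?_) (conic_card_le hp hodd)
  intro x hx
  simp only [Finset.mem_filter] at hx ⊢
  tauto

lemma T_pow_le {p : ℕ} (hp : p.Prime) (hodd : Odd p) :
    ∀ k : ℕ, k ≠ 0 → T (p ^ k) ≤ p ^ k + p ^ (k - 1) := by
  intro k
  induction k with
  | zero => intro h; exact absurd rfl h
  | succ n ih =>
    intro _
    rcases Nat.eq_zero_or_pos n with hn | hn
    · subst hn
      simpa using T_prime_le hp hodd
    · obtain ⟨m, rfl⟩ : ∃ m, n = m + 1 := ⟨n - 1, by omega⟩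
      calc T (p ^ (m + 1 + 1)) ≤ p * T (p ^ (m + 1)) := T_pow_succ_le hp hodd (by omega)
        _ ≤ p * (p ^ (m + 1) + p ^ (m + 1 - 1)) := Nat.mul_le_mul_left p (ih (by omega))
        _ = p ^ (m + 1 + 1) + p ^ (m + 1 + 1 - 1) := by
            simp only [Nat.add_sub_cancel]
            ring
    
lemma T_le : ∀ d : ℕ, d ≠ 0 → Odd d →
    (T d : ℝ) ≤ (d : ℝ) * ∏ p ∈ d.primeFactors, (1 + 1 / (p : ℝ)) := by
  intro d
  induction d using Nat.recOnPosPrimePosCoprime with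
  | prime_pow p n hp hn =>
    intro _ hodd
    have hp' : p.Prime := hp
    have hpodd : Odd p := by
      rcases hp'.eq_two_or_odd' with h2 | h
      · exfalso
        rw [h2] at hodd
        rw [Nat.odd_iff] at hodd
        have : (2 : ℕ) ∣ 2 ^ n := dvd_pow_self 2 hn.ne'
        omega
      · exact h
    rw [Nat.primeFactors_prime_pow hn.ne' hp', Finset.prod_singleton]
    have hb : T (p ^ n) ≤ p ^ n + p ^ (n - 1) := T_pow_le hp' hpodd n hn.ne'
    have hcast : ((p ^ n + p ^ (n - 1) : ℕ) : ℝ) = (p : ℝ) ^ n * (1 + 1 / (p : ℝ)) := by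
      have hp0 : (p : ℝ) ≠ 0 := Nat.cast_ne_zero.mpr hp'.pos.ne'
      push_cast
      rw [mul_add, mul_one, mul_one_div]
      congr 1
      rw [eq_div_iff hp0, ← pow_succ]
      congr 1
      omega
    calc (T (p ^ n) : ℝ) ≤ ((p ^ n + p ^ (n - 1) : ℕ) : ℝ) := Nat.cast_le.mpr hb
      _ = (p : ℝ) ^ n * (1 + 1 / (p : ℝ)) := hcast
      _ = ((p ^ n : ℕ) : ℝ) * (1 + 1 / (p : ℝ)) := by push_cast; ring
  | zero => intro h; exact absurd rfl h
  | one =>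
    intro _ _
    simpa using (Nat.cast_le (α := ℝ)).mpr T_one_le
  | coprime a b ha hb hcop iha ihb =>
    intro hab0 habodd
    obtain ⟨haodd, hbodd⟩ := Nat.odd_mul.mp habodd
    haveI : NeZero a := ⟨by omega⟩
    haveI : NeZero b := ⟨by omega⟩
    have h1 := iha (by omega) haodd
    have h2 := ihb (by omega) hbodd
    rw [T_mul hcop, Nat.Coprime.primeFactors_mul hcop,
      Finset.prod_union (Nat.Coprime.disjoint_primeFactors hcop)]
    have hprodb : (0 : ℝ) ≤ ∏ p ∈ b.primeFactors, (1 + 1 / (p : ℝ)) := by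
      apply Finset.prod_nonneg
      intro i hi
      positivity
    push_cast
    calc (T a : ℝ) * (T b : ℝ)
        ≤ ((a : ℝ) * ∏ p ∈ a.primeFactors, (1 + 1 / (p : ℝ))) *
          ((b : ℝ) * ∏ p ∈ b.primeFactors, (1 + 1 / (p : ℝ))) := by
          apply mul_le_mul h1 h2 (Nat.cast_nonneg _)
          positivity
      _ = (a : ℝ) * (b : ℝ) * ((∏ p ∈ a.primeFactors, (1 + 1 / (p : ℝ))) *
          ∏ p ∈ b.primeFactors, (1 + 1 / (p : ℝ))) := by ring

theorem stmt_8 (d : ℕ) (hd : 0 < d) (hodd : Odd d) :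
    (s d : ℝ) ≤ (d : ℝ) * ∏ p ∈ d.primeFactors, (1 + 1 / (p : ℝ)) := by
  rw [s_eq_T d hd]
  exact T_le d hd.ne' hodd
end
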